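/- The matrices F₁, F₂, F₃ satisfy the six commutator identities [F₁, X] = F₂, [F₁, Y] = F₂, [F₂, X] = −(sin γ)² F₁, [F₂, Y] = −F₃, [F₃, X] = (sin γ)² F₂, and [F₃, Y] = F₂. Consequently the linear span of {F₁, F₂, F₃} in the 3×3 real matrices is invariant under the maps M ↦ [M, X] and M ↦ [M, Y]. -/
import Mathlib


open Matrix Real

/-- The generator of the global Grover operator in the large-block limit. -/
noncomputable def Xmat (γ : ℝ) : Matrix (Fin 3) (Fin 3) ℝ :=
  !![0, (sin γ)^2, sin γ * cos γ;
     -(sin γ)^2, 0, 0;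
     -(sin γ * cos γ), 0, 0]

/-- The generator of the local Grover operator in the large-block limit. -/
def Ymat : Matrix (Fin 3) (Fin 3) ℝ :=
  !![0, 1, 0; -1, 0, 0; 0, 0, 0]

/-- The matrix commutator `[A, B] = AB − BA`. -/
def matComm (A B : Matrix (Fin 3) (Fin 3) ℝ) : Matrix (Fin 3) (Fin 3) ℝ := A * B - B * A

noncomputable def F1 (γ : ℝ) : Matrix (Fin 3) (Fin 3) ℝ := Xmat γ - Ymat
noncomputable def F2 (γ : ℝ) : Matrix (Fin 3) (Fin 3) ℝ := matComm (Xmat γ) Ymat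
noncomputable def F3 (γ : ℝ) : Matrix (Fin 3) (Fin 3) ℝ := matComm Ymat (matComm (Xmat γ) Ymat)

lemma matComm_smul (a : ℝ) (A B : Matrix (Fin 3) (Fin 3) ℝ) :
    matComm (a • A) B = a • matComm A B := by
  simp [matComm, smul_sub, Matrix.smul_mul, Matrix.mul_smul]

lemma matComm_add (A A' B : Matrix (Fin 3) (Fin 3) ℝ) :
    matComm (A + A') B = matComm A B + matComm A' B := by
  simp [matComm, add_mul, mul_add]; abel

set_option maxHeartbeats 2000000 in
/-- The matrices `F₁, F₂, F₃` satisfy the six commutator identities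
`[F₁, X] = F₂`, `[F₁, Y] = F₂`, `[F₂, X] = −(sin γ)² F₁`, `[F₂, Y] = −F₃`,
`[F₃, X] = (sin γ)² F₂`, `[F₃, Y] = F₂`, and consequently the span of `{F₁, F₂, F₃}`
is invariant under `M ↦ [M, X]` and `M ↦ [M, Y]`. -/
theorem stmt_1 (γ : ℝ) (hγ : γ ∈ Set.Ioo 0 (π/2)) :
    matComm (F1 γ) (Xmat γ) = F2 γ ∧
    matComm (F1 γ) Ymat = F2 γ ∧
    matComm (F2 γ) (Xmat γ) = (-(sin γ)^2) • F1 γ ∧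
    matComm (F2 γ) Ymat = -(F3 γ) ∧
    matComm (F3 γ) (Xmat γ) = ((sin γ)^2) • F2 γ ∧
    matComm (F3 γ) Ymat = F2 γ ∧
    (∀ M ∈ Submodule.span ℝ ({F1 γ, F2 γ, F3 γ} : Set (Matrix (Fin 3) (Fin 3) ℝ)),
      matComm M (Xmat γ) ∈ Submodule.span ℝ ({F1 γ, F2 γ, F3 γ} : Set (Matrix (Fin 3) (Fin 3) ℝ)) ∧
      matComm M Ymat ∈ Submodule.span ℝ ({F1 γ, F2 γ, F3 γ} : Set (Matrix (Fin 3) (Fin 3) ℝ))) := by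
  have pyth : sin γ ^ 2 + cos γ ^ 2 = 1 := sin_sq_add_cos_sq γ
  have h1 : matComm (F1 γ) (Xmat γ) = F2 γ := by
    ext i j
    fin_cases i <;> fin_cases j <;>
      simp [F1, F2, matComm, Xmat, Ymat, Matrix.mul_apply, Fin.sum_univ_three, Matrix.vecHead, Matrix.vecTail] <;>
      nlinarith [pyth]
  have h2 : matComm (F1 γ) Ymat = F2 γ := by
    ext i j
    fin_cases i <;> fin_cases j <;>
      simp [F1, F2, matComm, Xmat, Ymat, Matrix.mul_apply, Fin.sum_univ_three, Matrix.vecHead, Matrix.vecTail] <;>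
      nlinarith [pyth]
  have h3 : matComm (F2 γ) (Xmat γ) = (-(sin γ)^2) • F1 γ := by
    ext i j
    fin_cases i <;> fin_cases j <;>
      simp [F1, F2, matComm, Xmat, Ymat, Matrix.mul_apply, Fin.sum_univ_three, Matrix.vecHead, Matrix.vecTail] <;>
      nlinarith [pyth]
  have h4 : matComm (F2 γ) Ymat = -(F3 γ) := by
    ext i j
    fin_cases i <;> fin_cases j <;>
      simp [F2, F3, matComm, Xmat, Ymat, Matrix.mul_apply, Fin.sum_univ_three, Matrix.vecHead, Matrix.vecTail] <;>
      nlinarith [pyth]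
  have h5 : matComm (F3 γ) (Xmat γ) = ((sin γ)^2) • F2 γ := by
    ext i j
    fin_cases i <;> fin_cases j <;>
      simp [F2, F3, matComm, Xmat, Ymat, Matrix.mul_apply, Fin.sum_univ_three, Matrix.vecHead, Matrix.vecTail] <;>
      nlinarith [pyth]
  have h6 : matComm (F3 γ) Ymat = F2 γ := by
    ext i j
    fin_cases i <;> fin_cases j <;>
      simp [F2, F3, matComm, Xmat, Ymat, Matrix.mul_apply, Fin.sum_univ_three, Matrix.vecHead, Matrix.vecTail] <;>
      nlinarith [pyth]
  refine ⟨h1, h2, h3, h4, h5, h6, ?_⟩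
  set S := Submodule.span ℝ ({F1 γ, F2 γ, F3 γ} : Set (Matrix (Fin 3) (Fin 3) ℝ)) with hS
  have m1 : F1 γ ∈ S := Submodule.subset_span (by simp)
  have m2 : F2 γ ∈ S := Submodule.subset_span (by simp)
  have m3 : F3 γ ∈ S := Submodule.subset_span (by simp)
  intro M hM
  induction hM using Submodule.span_induction with
  | mem x hx =>
    rcases hx with rfl | rfl | rfl
    · exact ⟨h1 ▸ m2, h2 ▸ m2⟩
    · exact ⟨h3 ▸ S.smul_mem _ m1, h4 ▸ S.neg_mem m3⟩
    · exact ⟨h5 ▸ S.smul_mem _ m2, h6 ▸ m2⟩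
  | zero => constructor <;> simp [matComm]
  | add x y _ _ hx hy =>
    exact ⟨matComm_add x y _ ▸ S.add_mem hx.1 hy.1, matComm_add x y _ ▸ S.add_mem hx.2 hy.2⟩
  | smul a x _ hx =>
    exact ⟨matComm_smul a x _ ▸ S.smul_mem a hx.1, matComm_smul a x _ ▸ S.smul_mem a hx.2⟩
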